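/- Let f, h : ℝⁿ → ℝ be smooth with compact support. Then the function s ↦ A(f + s h) is differentiable at s = 0 and d/ds A(f + s h)|_{s=0} = −∫_{ℝⁿ} (Δf + P(f)) h dx; that is, the right-hand side of the PDE, Δf + P(f), is the negative L² gradient of the action functional A. -/

import Mathlib

open MeasureTheory Filter Topology
open scoped ENNReal

noncomputable section

/-- Euclidean space `ℝⁿ`. -/
abbrev Spc (n : ℕ) := EuclideanSpace ℝ (Fin n)

/-- The Laplacian in the spatial variables. -/
noncomputable def lap {n : ℕ} (f : Spc n → ℝ) (x : Spc n) : ℝ :=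
  ∑ i : Fin n, fderiv ℝ (fun y => fderiv ℝ f y (EuclideanSpace.single i 1)) x
    (EuclideanSpace.single i 1)

/-- The polynomial nonlinearity `P(f)(x) = -f(x)^N + ∑_{i<N} aᵢ(x) f(x)^i`. -/
noncomputable def Pfun {n N : ℕ} (a : Fin N → Spc n → ℝ) (f : Spc n → ℝ) (x : Spc n) : ℝ :=
  -(f x) ^ N + ∑ i : Fin N, a i x * f x ^ (i : ℕ)

/-- The time derivative `∂u/∂t`. -/
noncomputable def timeDeriv {n : ℕ} (u : ℝ × Spc n → ℝ) (t : ℝ) (x : Spc n) : ℝ :=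
  deriv (fun s => u (s, x)) t

/-- `u` is a global solution of `∂u/∂t = Δu + P(u)`. -/
def IsSol {n N : ℕ} (a : Fin N → Spc n → ℝ) (u : ℝ × Spc n → ℝ) : Prop :=
  ∀ t x, timeDeriv u t x = lap (fun y => u (t, y)) x + Pfun a (fun y => u (t, y)) x

/-- `w` is an equilibrium: `Δw + P(w) = 0`. -/
def IsEquilibrium {n N : ℕ} (a : Fin N → Spc n → ℝ) (w : Spc n → ℝ) : Prop :=
  ∀ x, lap w x + Pfun a w x = 0

/-- The energy density `|∂u/∂t|² + |Δu + P(u)|²`. -/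
noncomputable def energyDensity {n N : ℕ} (a : Fin N → Spc n → ℝ) (u : ℝ × Spc n → ℝ)
    (t : ℝ) (x : Spc n) : ℝ :=
  (timeDeriv u t x) ^ 2 + (lap (fun y => u (t, y)) x + Pfun a (fun y => u (t, y)) x) ^ 2

/-- The energy `E(u) = (1/2) ∫_ℝ ∫_{ℝⁿ} (|∂u/∂t|² + |Δu + P(u)|²) dx dt`, valued in `ℝ≥0∞`. -/
noncomputable def energy {n N : ℕ} (a : Fin N → Spc n → ℝ) (u : ℝ × Spc n → ℝ) : ℝ≥0∞ :=
  (1 / 2) * ∫⁻ t : ℝ, ∫⁻ x : Spc n, ENNReal.ofReal (energyDensity a u t x)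

/-- The action density `(1/2)|∇f|² + f^{N+1}/(N+1) - ∑_{i<N} aᵢ f^{i+1}/(i+1)`. -/
noncomputable def actionDensity {n N : ℕ} (a : Fin N → Spc n → ℝ) (f : Spc n → ℝ)
    (x : Spc n) : ℝ :=
  (1 / 2) * ‖gradient f x‖ ^ 2 + f x ^ (N + 1) / (N + 1)
    - ∑ i : Fin N, a i x * f x ^ ((i : ℕ) + 1) / ((i : ℕ) + 1)

/-- The action functional `A(f)`. -/
noncomputable def action {n N : ℕ} (a : Fin N → Spc n → ℝ) (f : Spc n → ℝ) : ℝ :=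
  ∫ x : Spc n, actionDensity a f x

/-- `f` has finite action. -/
def FiniteAction {n N : ℕ} (a : Fin N → Spc n → ℝ) (f : Spc n → ℝ) : Prop :=
  Integrable (actionDensity a f)

/-- The coefficients `aᵢ` are smooth, in `L¹ ∩ L∞`, with all derivatives of all orders
bounded. -/
def GoodCoeffs {n N : ℕ} (a : Fin N → Spc n → ℝ) : Prop :=
  ∀ i, ContDiff ℝ (⊤ : ℕ∞) (a i) ∧ Integrable (a i) ∧
    ∀ k : ℕ, ∃ C : ℝ, ∀ x, ‖iteratedFDeriv ℝ k (a i) x‖ ≤ C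

/-- `u`, `∂u/∂t` and the spatial derivatives of `u` up to order two are bounded by a
constant multiple of `(1+|x|)^{-(n+1)}`, uniformly for `t` in compact intervals. -/
def AdmissibleDecay {n : ℕ} (u : ℝ × Spc n → ℝ) : Prop :=
  ∀ T > (0 : ℝ), ∃ C : ℝ, ∀ t : ℝ, ∀ x : Spc n, |t| ≤ T →
    |u (t, x)| ≤ C * (1 + ‖x‖) ^ (-(n + 1 : ℝ)) ∧
    |timeDeriv u t x| ≤ C * (1 + ‖x‖) ^ (-(n + 1 : ℝ)) ∧
    ‖fderiv ℝ (fun y => u (t, y)) x‖ ≤ C * (1 + ‖x‖) ^ (-(n + 1 : ℝ)) ∧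
    ‖iteratedFDeriv ℝ 2 (fun y => u (t, y)) x‖ ≤ C * (1 + ‖x‖) ^ (-(n + 1 : ℝ))


section AuxLemmas

open scoped RealInnerProductSpace

variable {n : ℕ}

lemma aux_inner_grad (g : Spc n → ℝ) (x v : Spc n) :
    ⟪gradient g x, v⟫ = fderiv ℝ g x v :=
  InnerProductSpace.toDual_symm_apply

lemma aux_grad_comb (g₁ g₂ : Spc n → ℝ) (x : Spc n) (s : ℝ)
    (h₁ : DifferentiableAt ℝ g₁ x) (h₂ : DifferentiableAt ℝ g₂ x) :
    gradient (fun y => g₁ y + s * g₂ y) x = gradient g₁ x + s • gradient g₂ x := by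
  unfold gradient
  rw [fderiv_fun_add h₁ (h₂.const_mul s), fderiv_const_mul h₂, map_add, _root_.map_smul]

lemma aux_cont_grad (g : Spc n → ℝ) (hg : ContDiff ℝ (⊤ : ℕ∞) g) : Continuous (gradient g) :=
  (LinearIsometryEquiv.continuous _).comp (hg.continuous_fderiv (by simp))

lemma aux_fderiv_zero (g : Spc n → ℝ) (x : Spc n) (hx : x ∉ tsupport g) :
    fderiv ℝ g x = 0 := by
  by_contra hc
  exact hx (support_fderiv_subset ℝ (Function.mem_support.2 hc))

lemma aux_grad_zero (g : Spc n → ℝ) (x : Spc n) (hx : x ∉ tsupport g) : gradient g x = 0 := by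
  simp [gradient, aux_fderiv_zero g x hx]

lemma aux_pderiv_contDiff (g : Spc n → ℝ) (hg : ContDiff ℝ (⊤ : ℕ∞) g) (v : Spc n) :
    ContDiff ℝ (⊤ : ℕ∞) (fun x => fderiv ℝ g x v) :=
  ((ContinuousLinearMap.apply ℝ ℝ v).contDiff.comp
    (hg.fderiv_right (m := (⊤ : ℕ∞)) (by norm_cast)) : )

lemma aux_grad_coord (g : Spc n → ℝ) (x : Spc n) (i : Fin n) :
    gradient g x i = fderiv ℝ g x (EuclideanSpace.single i 1) := by
  rw [← aux_inner_grad]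
  rw [EuclideanSpace.inner_single_right]; simp [gradient]

lemma aux_inner_grads (g₁ g₂ : Spc n → ℝ) (x : Spc n) :
    ⟪gradient g₁ x, gradient g₂ x⟫
      = ∑ i : Fin n, fderiv ℝ g₁ x (EuclideanSpace.single i 1)
          * fderiv ℝ g₂ x (EuclideanSpace.single i 1) := by
  rw [show ⟪gradient g₁ x, gradient g₂ x⟫ = ∑ i : Fin n, gradient g₁ x i * gradient g₂ x i by
    rw [PiLp.inner_apply]; simp only [RCLike.inner_apply, conj_trivial]
    exact Finset.sum_congr rfl fun i _ => mul_comm _ _]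
  exact Finset.sum_congr rfl fun i _ => by rw [aux_grad_coord, aux_grad_coord]

end AuxLemmas

open scoped RealInnerProductSpace in
/-- For smooth compactly supported `f, h : ℝⁿ → ℝ`, the function
`s ↦ A(f + s h)` is differentiable at `s = 0` with derivative
`-∫ (Δf + P(f)) h dx`: the right-hand side of the PDE is the negative `L²` gradient of the
action functional. -/
theorem pde_is_negative_gradient_of_action
    {n N : ℕ} (hn : 1 ≤ n) (hN : 2 ≤ N)
    (a : Fin N → Spc n → ℝ) (ha : GoodCoeffs a)
    (f h : Spc n → ℝ)
    (hf : ContDiff ℝ (⊤ : ℕ∞) f) (hh : ContDiff ℝ (⊤ : ℕ∞) h)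
    (hfc : HasCompactSupport f) (hhc : HasCompactSupport h) :
    HasDerivAt (fun s : ℝ => action a (fun x => f x + s * h x))
      (-∫ x : Spc n, (lap f x + Pfun a f x) * h x) 0 := by
  classical
  have topcast : (1 : WithTop ℕ∞) ≤ ((⊤ : ℕ∞) : WithTop ℕ∞) := by norm_cast
  set e : Fin n → Spc n := fun i => EuclideanSpace.single i 1 with he
  set K : Set (Spc n) := tsupport f ∪ tsupport h with hKdef
  have hK : IsCompact K := hfc.union hhc
  have hKm : MeasurableSet K :=
    ((isClosed_tsupport f).union (isClosed_tsupport h)).measurableSet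
  have hf0 : ∀ x ∉ K, f x = 0 := fun x hx =>
    image_eq_zero_of_notMem_tsupport (fun hc => hx (Or.inl hc))
  have hh0 : ∀ x ∉ K, h x = 0 := fun x hx =>
    image_eq_zero_of_notMem_tsupport (fun hc => hx (Or.inr hc))
  have hgf0 : ∀ x ∉ K, gradient f x = 0 := fun x hx =>
    aux_grad_zero f x (fun hc => hx (Or.inl hc))
  have hgh0 : ∀ x ∉ K, gradient h x = 0 := fun x hx =>
    aux_grad_zero h x (fun hc => hx (Or.inr hc))
  have hdh0 : ∀ x ∉ K, fderiv ℝ h x = 0 := fun x hx =>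
    aux_fderiv_zero h x (fun hc => hx (Or.inr hc))
  have hcf : Continuous f := hf.continuous
  have hch : Continuous h := hh.continuous
  have hgf : Continuous (gradient f) := aux_cont_grad f hf
  have hgh : Continuous (gradient h) := aux_cont_grad h hh
  have hac : ∀ i, Continuous (a i) := fun i => (ha i).1.continuous
  have hfd : Differentiable ℝ f := hf.differentiable (by simp)
  have hhd : Differentiable ℝ h := hh.differentiable (by simp)
  have intCC : ∀ g : Spc n → ℝ, Continuous g → (∀ x ∉ K, g x = 0) → Integrable g :=
    fun g hg hz => hg.integrable_of_hasCompactSupport (HasCompactSupport.intro hK hz)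
  set G : ℝ → Spc n → ℝ := fun t x =>
    ⟪gradient f x, gradient h x⟫ + t * ‖gradient h x‖ ^ 2 + (f x + t * h x) ^ N * h x
      - ∑ i : Fin N, a i x * ((f x + t * h x) ^ (i : ℕ) * h x) with hGdef
  -- pointwise expansion of the action density
  have expand : ∀ s : ℝ, ∀ x : Spc n, actionDensity a (fun y => f y + s * h y) x =
      (1 / 2) * ‖gradient f x‖ ^ 2 + s * ⟪gradient f x, gradient h x⟫
        + s ^ 2 * ((1 / 2) * ‖gradient h x‖ ^ 2)
        + (f x + s * h x) ^ (N + 1) / ((N : ℝ) + 1)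
        - ∑ i : Fin N, a i x * (f x + s * h x) ^ ((i : ℕ) + 1) / (((i : ℕ) : ℝ) + 1) := by
    intro s x
    rw [actionDensity, aux_grad_comb f h x s (hfd x) (hhd x), norm_add_sq_real,
      real_inner_smul_right, norm_smul, Real.norm_eq_abs, mul_pow, sq_abs]
    ring
  -- pointwise derivative in the parameter s
  have deriv_pt : ∀ t : ℝ, ∀ x : Spc n,
      HasDerivAt (fun s : ℝ => actionDensity a (fun y => f y + s * h y) x) (G t x) t := by
    intro t x
    have hrw : (fun s : ℝ => actionDensity a (fun y => f y + s * h y) x)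
        = fun s : ℝ => (1 / 2) * ‖gradient f x‖ ^ 2 + s * ⟪gradient f x, gradient h x⟫
          + s ^ 2 * ((1 / 2) * ‖gradient h x‖ ^ 2)
          + (f x + s * h x) ^ (N + 1) / ((N : ℝ) + 1)
          - ∑ i : Fin N, a i x * (f x + s * h x) ^ ((i : ℕ) + 1) / (((i : ℕ) : ℝ) + 1) :=
      funext fun s => expand s x
    rw [hrw]
    have base : HasDerivAt (fun s : ℝ => f x + s * h x) (h x) t := by
      simpa using (hasDerivAt_const t (f x)).fun_add ((hasDerivAt_id t).mul_const (h x))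
    have h1 : HasDerivAt (fun s : ℝ => (1 / 2) * ‖gradient f x‖ ^ 2
          + s * ⟪gradient f x, gradient h x⟫ + s ^ 2 * ((1 / 2) * ‖gradient h x‖ ^ 2))
        (⟪gradient f x, gradient h x⟫ + t * ‖gradient h x‖ ^ 2) t := by
      have := ((hasDerivAt_const t ((1 / 2) * ‖gradient f x‖ ^ 2)).fun_add
        ((hasDerivAt_id t).mul_const ⟪gradient f x, gradient h x⟫)).fun_add
        ((hasDerivAt_pow 2 t).mul_const ((1 / 2) * ‖gradient h x‖ ^ 2))
      refine this.congr_deriv ?_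
      norm_num
      ring
    have h2 : HasDerivAt (fun s : ℝ => (f x + s * h x) ^ (N + 1) / ((N : ℝ) + 1))
        ((f x + t * h x) ^ N * h x) t := by
      have := (base.pow (N + 1)).div_const ((N : ℝ) + 1)
      refine this.congr_deriv ?_
      have hne : ((N : ℝ) + 1) ≠ 0 := by positivity
      field_simp
      push_cast
      ring
    have h3 : ∀ i : Fin N, HasDerivAt
        (fun s : ℝ => a i x * (f x + s * h x) ^ ((i : ℕ) + 1) / (((i : ℕ) : ℝ) + 1))
        (a i x * ((f x + t * h x) ^ (i : ℕ) * h x)) t := by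
      intro i
      have := ((base.pow ((i : ℕ) + 1)).const_mul (a i x)).div_const (((i : ℕ) : ℝ) + 1)
      refine this.congr_deriv ?_
      have hne : (((i : ℕ) : ℝ) + 1) ≠ 0 := by positivity
      field_simp
      push_cast
      ring
    exact (h1.add h2).sub (HasDerivAt.fun_sum fun i _ => h3 i)
  -- joint continuity of G
  have cont_base : Continuous fun p : ℝ × Spc n => f p.2 + p.1 * h p.2 :=
    (hcf.comp continuous_snd).add (continuous_fst.mul (hch.comp continuous_snd))
  have cont_G : Continuous fun p : ℝ × Spc n => G p.1 p.2 := by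
    have c1 : Continuous fun p : ℝ × Spc n => ⟪gradient f p.2, gradient h p.2⟫ :=
      (hgf.comp continuous_snd).inner (hgh.comp continuous_snd)
    have c2 : Continuous fun p : ℝ × Spc n => p.1 * ‖gradient h p.2‖ ^ 2 :=
      continuous_fst.mul (((hgh.comp continuous_snd).norm).pow 2)
    have c3 : Continuous fun p : ℝ × Spc n => (f p.2 + p.1 * h p.2) ^ N * h p.2 :=
      (cont_base.pow N).mul (hch.comp continuous_snd)
    have c4 : Continuous fun p : ℝ × Spc n =>
        ∑ i : Fin N, a i p.2 * ((f p.2 + p.1 * h p.2) ^ (i : ℕ) * h p.2) :=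
      continuous_finset_sum _ fun i _ => ((hac i).comp continuous_snd).mul
        ((cont_base.pow _).mul (hch.comp continuous_snd))
    exact ((c1.add c2).add c3).sub c4
  have hGz : ∀ t : ℝ, ∀ x ∉ K, G t x = 0 := by
    intro t x hx
    simp [hGdef, hh0 x hx, hgh0 x hx, hdh0 x hx]
  obtain ⟨C, hC⟩ : ∃ C, ∀ p ∈ (Set.Icc (-1 : ℝ) 1) ×ˢ K, ‖G p.1 p.2‖ ≤ C :=
    (isCompact_Icc.prod hK).exists_bound_of_continuousOn cont_G.continuousOn
  -- continuity of the density for each s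
  have cont_dens : ∀ s : ℝ,
      Continuous fun x => actionDensity a (fun y => f y + s * h y) x := by
    intro s
    rw [show (fun x => actionDensity a (fun y => f y + s * h y) x)
      = fun x => (1 / 2) * ‖gradient f x‖ ^ 2 + s * ⟪gradient f x, gradient h x⟫
        + s ^ 2 * ((1 / 2) * ‖gradient h x‖ ^ 2)
        + (f x + s * h x) ^ (N + 1) / ((N : ℝ) + 1)
        - ∑ i : Fin N, a i x * (f x + s * h x) ^ ((i : ℕ) + 1) / (((i : ℕ) : ℝ) + 1)
      from funext fun x => expand s x]
    have cb : Continuous fun x => f x + s * h x := hcf.add (continuous_const.mul hch)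
    exact ((((continuous_const.mul (hgf.norm.pow 2)).add
      (continuous_const.mul (hgf.inner hgh))).add
      (continuous_const.mul (continuous_const.mul (hgh.norm.pow 2)))).add
      ((cb.pow (N + 1)).div_const _)).sub
      (continuous_finset_sum _ fun i _ => (((hac i).mul (cb.pow _)).div_const _))
  -- apply differentiation under the integral sign
  have hF_meas : ∀ᶠ s in 𝓝 (0 : ℝ),
      AEStronglyMeasurable (fun x => actionDensity a (fun y => f y + s * h y) x)
        (volume : Measure (Spc n)) :=
    Eventually.of_forall fun s => (cont_dens s).aestronglyMeasurable
  have hF_int : Integrable (fun x => actionDensity a (fun y => f y + (0 : ℝ) * h y) x) := by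
    refine intCC _ (cont_dens 0) fun x hx => ?_
    rw [expand 0 x]
    simp [hf0 x hx, hh0 x hx, hgf0 x hx, hgh0 x hx]
  have hF'_meas : AEStronglyMeasurable (G 0) (volume : Measure (Spc n)) :=
    (cont_G.comp (continuous_const.prodMk continuous_id)).aestronglyMeasurable
  have bound_int : Integrable (K.indicator fun _ => C) :=
    (integrable_indicator_iff hKm).2 (integrableOn_const hK.measure_lt_top.ne)
  have h_bound : ∀ᵐ x : Spc n, ∀ t ∈ Metric.ball (0 : ℝ) 1,
      ‖G t x‖ ≤ K.indicator (fun _ => C) x := by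
    refine Eventually.of_forall fun x t ht => ?_
    by_cases hx : x ∈ K
    · rw [Set.indicator_of_mem hx]
      refine hC (t, x) ⟨?_, hx⟩
      have := Metric.mem_ball.1 ht
      rw [Real.dist_eq, sub_zero] at this
      exact ⟨by linarith [abs_le.1 this.le], by linarith [abs_le.1 this.le]⟩
    · rw [Set.indicator_of_notMem hx, hGz t x hx]
      simp
  have h_diff : ∀ᵐ x : Spc n, ∀ t ∈ Metric.ball (0 : ℝ) 1,
      HasDerivAt (fun s : ℝ => actionDensity a (fun y => f y + s * h y) x) (G t x) t :=
    Eventually.of_forall fun x t _ => deriv_pt t x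
  have main := (hasDerivAt_integral_of_dominated_loc_of_deriv_le (Metric.ball_mem_nhds 0 one_pos) hF_meas hF_int
    hF'_meas h_bound bound_int h_diff).2
  -- now identify the derivative with the claimed expression
  -- continuity of partial derivatives
  have cdf : ∀ i : Fin n, Continuous fun x => fderiv ℝ f x (e i) :=
    fun i => (aux_pderiv_contDiff f hf (e i)).continuous
  have cdh : ∀ i : Fin n, Continuous fun x => fderiv ℝ h x (e i) :=
    fun i => (aux_pderiv_contDiff h hh (e i)).continuous
  have cd2f : ∀ i : Fin n,
      Continuous fun x => fderiv ℝ (fun y => fderiv ℝ f y (e i)) x (e i) :=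
    fun i => (aux_pderiv_contDiff _ (aux_pderiv_contDiff f hf (e i)) (e i)).continuous
  -- integrable pieces
  have iT1 : Integrable (fun x => ⟪gradient f x, gradient h x⟫) :=
    intCC _ (hgf.inner hgh) fun x hx => by simp [hgh0 x hx]
  have iT2 : Integrable (fun x => f x ^ N * h x) :=
    intCC _ ((hcf.pow N).mul hch) fun x hx => by simp [hh0 x hx]
  have iT3 : ∀ i : Fin N, Integrable (fun x => a i x * (f x ^ (i : ℕ) * h x)) :=
    fun i => intCC _ ((hac i).mul ((hcf.pow _).mul hch)) fun x hx => by simp [hh0 x hx]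
  have iT3' : Integrable (fun x => ∑ i : Fin N, a i x * (f x ^ (i : ℕ) * h x)) :=
    integrable_finset_sum _ fun i _ => iT3 i
  have idfdh : ∀ i : Fin n, Integrable (fun x => fderiv ℝ f x (e i) * fderiv ℝ h x (e i)) :=
    fun i => intCC _ ((cdf i).mul (cdh i)) fun x hx => by simp [hdh0 x hx]
  have id2fh : ∀ i : Fin n,
      Integrable (fun x => fderiv ℝ (fun y => fderiv ℝ f y (e i)) x (e i) * h x) :=
    fun i => intCC _ ((cd2f i).mul hch) fun x hx => by simp [hh0 x hx]
  have ilaph : Integrable (fun x => lap f x * h x) := by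
    refine intCC _ ?_ fun x hx => by simp [hh0 x hx]
    exact (continuous_finset_sum _ fun i _ => cd2f i).mul hch
  have iPh : Integrable (fun x => Pfun a f x * h x) := by
    refine intCC _ ?_ fun x hx => by simp [Pfun, hh0 x hx]
    exact (((hcf.pow N).neg.add (continuous_finset_sum _ fun i _ =>
      (hac i).mul (hcf.pow _))).mul hch)
  -- integration by parts in each coordinate
  have ibp : ∀ i : Fin n,
      ∫ x : Spc n, fderiv ℝ f x (e i) * fderiv ℝ h x (e i)
        = -∫ x : Spc n, fderiv ℝ (fun y => fderiv ℝ f y (e i)) x (e i) * h x := by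
    intro i
    refine integral_mul_fderiv_eq_neg_fderiv_mul_of_integrable (id2fh i) (idfdh i)
      (intCC _ ((cdf i).mul hch) fun x hx => by simp [hh0 x hx]) ?_ (fun x _ => hhd x)
    exact fun x _ => (aux_pderiv_contDiff f hf (e i)).differentiable (by simp) x
  -- the gradient term
  have T1eq : ∫ x : Spc n, ⟪gradient f x, gradient h x⟫ = -∫ x : Spc n, lap f x * h x := by
    rw [show (fun x : Spc n => ⟪gradient f x, gradient h x⟫)
      = fun x => ∑ i : Fin n, fderiv ℝ f x (e i) * fderiv ℝ h x (e i)
      from funext fun x => aux_inner_grads f h x]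
    rw [integral_finset_sum _ fun i _ => idfdh i]
    rw [Finset.sum_congr rfl fun i _ => ibp i]
    rw [Finset.sum_neg_distrib, ← integral_finset_sum _ fun i _ => id2fh i]
    congr 1
    refine congrArg _ (funext fun x => ?_)
    rw [lap, Finset.sum_mul]
  -- the nonlinearity term
  have Peq : ∫ x : Spc n, Pfun a f x * h x
      = (∫ x : Spc n, ∑ i : Fin N, a i x * (f x ^ (i : ℕ) * h x))
        - ∫ x : Spc n, f x ^ N * h x := by
    rw [← integral_sub iT3' iT2]
    refine congrArg _ (funext fun x => ?_)
    rw [Pfun, add_mul, neg_mul, Finset.sum_mul]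
    rw [Finset.sum_congr rfl fun i _ => mul_assoc (a i x) (f x ^ (i : ℕ)) (h x)]
    ring
  -- value of the derivative integrand at 0
  have G0eq : (fun x : Spc n => G 0 x)
      = fun x => ⟪gradient f x, gradient h x⟫ + f x ^ N * h x
        - ∑ i : Fin N, a i x * (f x ^ (i : ℕ) * h x) := by
    funext x
    simp [hGdef]
  have intG0 : ∫ x : Spc n, G 0 x = -∫ x : Spc n, (lap f x + Pfun a f x) * h x := by
    have iT12 : Integrable (fun x : Spc n => ⟪gradient f x, gradient h x⟫ + f x ^ N * h x) :=
      iT1.add iT2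
    rw [G0eq, integral_sub iT12 iT3', integral_add iT1 iT2]
    have hsplit : ∫ x : Spc n, (lap f x + Pfun a f x) * h x
        = (∫ x : Spc n, lap f x * h x) + ∫ x : Spc n, Pfun a f x * h x := by
      rw [← integral_add ilaph iPh]
      exact congrArg _ (funext fun x => (add_mul _ _ _))
    rw [hsplit, Peq, T1eq]
    ring
  rw [← intG0]
  exact main


end
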